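/- Let u : ℝⁿ → ℝ ∪ {+∞} be a lower semicontinuous convex function, not identically +∞, with U := interior of its effective domain nonempty, and let x₀ ∈ ∂U with u(x₀) < +∞. Then the following are equivalent: (i) for some x₁ ∈ U the one-sided directional derivative lim_{t→0⁺} (u(x₀ + t(x₁−x₀)) − u(x₀))/t is finite; (ii) this limit is finite for every x₁ ∈ U; (iii) u admits a subgradient at x₀; (iv) there is a sequence xᵢ ∈ U converging to x₀ at which u is differentiable and |∇u(xᵢ)| does not tend to +∞. -/

import Mathlib

open Set Filter Topology
open MeasureTheory Bornology
open scoped RealInnerProductSpace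

noncomputable section

abbrev En (n : ℕ) := EuclideanSpace ℝ (Fin n)

lemma aux_seg_mem {n : ℕ} {D : Set (En n)} (hD : Convex ℝ D) {p d : En n}
    (hp : p ∈ D) (hpd : p + d ∈ D) {t : ℝ} (ht : t ∈ Icc (0:ℝ) 1) :
    p + t • d ∈ D := by
  have h := hD hp hpd (show (0:ℝ) ≤ 1 - t by linarith [ht.2]) ht.1 (by ring)
  have : (1 - t) • p + t • (p + d) = p + t • d := by
    simp [smul_add, sub_smul, one_smul]; abel
  rwa [this] at h

lemma aux_slope_mono {n : ℕ} {D : Set (En n)} {f : En n → ℝ}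
    (hf : ConvexOn ℝ D f) {p d : En n} (hp : p ∈ D) (hpd : p + d ∈ D) :
    MonotoneOn (fun t : ℝ => (f (p + t • d) - f p) / t) (Ioc (0:ℝ) 1) := by
  intro s hs t ht hst
  have ht0 : (0:ℝ) < t := hs.1.trans_le hst
  have hptd : p + t • d ∈ D := aux_seg_mem hf.1 hp hpd ⟨ht0.le, ht.2⟩
  set r : ℝ := s / t with hr
  have hr0 : 0 < r := div_pos hs.1 ht0
  have hr1 : r ≤ 1 := (div_le_one ht0).2 hst
  have hcomb := hf.2 hp hptd (show (0:ℝ) ≤ 1 - r by linarith) hr0.le (by ring)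
  have hptds : (1 - r) • p + r • (p + t • d) = p + s • d := by
    have : r • t • d = s • d := by
      rw [smul_smul, hr, div_mul_cancel₀ _ ht0.ne']
    rw [smul_add, this, sub_smul, one_smul]; abel
  rw [hptds, smul_eq_mul, smul_eq_mul] at hcomb
  rw [div_le_div_iff₀ hs.1 ht0]
  have : f (p + s • d) - f p ≤ r * (f (p + t • d) - f p) := by nlinarith
  have h2 : (f (p + s • d) - f p) * t ≤ r * (f (p + t • d) - f p) * t := by
    nlinarith
  calc (f (p + s • d) - f p) * t ≤ r * (f (p + t • d) - f p) * t := h2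
    _ = (f (p + t • d) - f p) * s := by
        rw [← div_mul_cancel₀ s ht0.ne', ← hr]; ring

lemma aux_deriv_le {n : ℕ} {D : Set (En n)} {f : En n → ℝ}
    (hf : ConvexOn ℝ D f) {p d : En n} (hp : p ∈ D) (hpd : p + d ∈ D)
    {L : En n →L[ℝ] ℝ} (hL : HasFDerivAt f L p) : L d ≤ f (p + d) - f p := by
  have h1 : HasDerivAt (fun t : ℝ => p + t • d) d 0 := by
    simpa using ((hasDerivAt_id (0:ℝ)).smul_const d).const_add p
  have h2 : HasDerivAt (fun t : ℝ => f (p + t • d)) (L d) 0 := by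
    have hL' : HasFDerivAt f L ((fun t : ℝ => p + t • d) 0) := by simpa using hL
    exact hL'.comp_hasDerivAt 0 h1
  rw [hasDerivAt_iff_tendsto_slope] at h2
  have h3 : Tendsto (fun t : ℝ => (f (p + t • d) - f p) / t) (𝓝[>] (0:ℝ)) (𝓝 (L d)) := by
    have := h2.mono_left (nhdsWithin_mono _ (fun x hx => (ne_of_gt hx : x ≠ 0)))
    refine this.congr' ?_
    filter_upwards [self_mem_nhdsWithin] with t (ht : 0 < t)
    simp [slope, sub_zero, div_eq_inv_mul]
  have hmono := aux_slope_mono hf hp hpd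
  refine le_of_tendsto h3 ?_
  filter_upwards [Ioo_mem_nhdsGT_of_mem (by constructor <;> norm_num : (0:ℝ) ∈ Ico (0:ℝ) 1)]
    with t ht
  have := hmono ⟨ht.1, ht.2.le⟩ (by constructor <;> norm_num : (1:ℝ) ∈ Ioc (0:ℝ) 1) ht.2.le
  simpa using this

set_option maxHeartbeats 2000000 in
theorem stmt7 {n : ℕ} (u : En n → EReal)
    (hlsc : LowerSemicontinuous u)
    (hconv : Convex ℝ {p : En n × ℝ | u p.1 ≤ (p.2 : EReal)})
    (hbot : ∀ x, u x ≠ ⊥) (htop : ∃ x, u x ≠ ⊤)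
    (U : Set (En n)) (hU : U = interior {x | u x ≠ ⊤}) (hUne : U.Nonempty)
    (x₀ : En n) (hx₀ : x₀ ∈ frontier U) (hfin : u x₀ ≠ ⊤) :
    List.TFAE [
      -- (i) finite one-sided directional derivative for some x₁ ∈ U
      (∃ x₁ ∈ U, ∃ m : ℝ, Tendsto
        (fun t : ℝ => ((u (x₀ + t • (x₁ - x₀))).toReal - (u x₀).toReal) / t)
        (𝓝[>] 0) (𝓝 m)),
      -- (ii) finite one-sided directional derivative for every x₁ ∈ U
      (∀ x₁ ∈ U, ∃ m : ℝ, Tendsto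
        (fun t : ℝ => ((u (x₀ + t • (x₁ - x₀))).toReal - (u x₀).toReal) / t)
        (𝓝[>] 0) (𝓝 m)),
      -- (iii) u admits a subgradient at x₀
      (∃ y : En n, ∀ x : En n, (((u x₀).toReal + ⟪x - x₀, y⟫ : ℝ) : EReal) ≤ u x),
      -- (iv) a sequence in U converging to x₀ at which u is differentiable with
      -- gradient norms not tending to +∞
      (∃ x : ℕ → En n, (∀ i, x i ∈ U) ∧ Tendsto x atTop (𝓝 x₀) ∧
        (∀ i, DifferentiableAt ℝ (fun z => (u z).toReal) (x i)) ∧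
        ¬ Tendsto (fun i => ‖fderiv ℝ (fun z => (u z).toReal) (x i)‖) atTop atTop)] := by
  set D : Set (En n) := {x | u x ≠ ⊤} with hD
  set f : En n → ℝ := fun z => (u z).toReal with hf
  have hft : ∀ x ∈ D, u x = ((f x : ℝ) : EReal) := fun x hx =>
    (EReal.coe_toReal hx (hbot x)).symm
  have hx₀D : x₀ ∈ D := hfin
  have hepi : ∀ x ∈ D, (x, f x) ∈ {p : En n × ℝ | u p.1 ≤ (p.2 : EReal)} :=
    fun x hx => (hft x hx).le
  have hkey : ∀ x ∈ D, ∀ y ∈ D, ∀ a b : ℝ, 0 ≤ a → 0 ≤ b → a + b = 1 →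
      a • x + b • y ∈ D ∧ f (a • x + b • y) ≤ a * f x + b * f y := by
    intro x hx y hy a b ha hb hab
    have h := hconv (hepi x hx) (hepi y hy) ha hb hab
    simp only [Prod.smul_mk, Prod.mk_add_mk, mem_setOf_eq, smul_eq_mul] at h
    have hne : u (a • x + b • y) ≠ ⊤ :=
      fun hc => by rw [hc] at h; exact (EReal.coe_lt_top _).not_ge h
    refine ⟨hne, ?_⟩
    rw [hft _ hne] at h
    exact_mod_cast h
  have hDconv : Convex ℝ D := fun x hx y hy a b ha hb hab =>
    (hkey x hx y hy a b ha hb hab).1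
  have hfconv : ConvexOn ℝ D f :=
    ⟨hDconv, fun x hx y hy a b ha hb hab => (hkey x hx y hy a b ha hb hab).2⟩
  have hUopen : IsOpen U := hU ▸ isOpen_interior
  have hUD : U ⊆ D := hU ▸ interior_subset
  have hx₀U : x₀ ∉ U := fun h => ((hUopen.frontier_eq ▸ hx₀).2 h)
  have hseg : ∀ x₁ ∈ U, ∀ t ∈ Ioc (0:ℝ) 1, x₀ + t • (x₁ - x₀) ∈ U := by
    intro x₁ hx₁ t ht
    have h := hDconv.combo_self_interior_mem_interior hx₀D (hU ▸ hx₁)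
      (show (0:ℝ) ≤ 1 - t by linarith [ht.2]) ht.1 (by ring)
    have he : (1 - t) • x₀ + t • x₁ = x₀ + t • (x₁ - x₀) := by
      simp [smul_sub, sub_smul, one_smul]; abel
    rw [he] at h; rwa [hU]
  have hQmono : ∀ x₁ ∈ U, MonotoneOn
      (fun t : ℝ => (f (x₀ + t • (x₁ - x₀)) - f x₀) / t) (Ioc (0:ℝ) 1) := by
    intro x₁ hx₁
    exact aux_slope_mono hfconv hx₀D (by simpa using hUD hx₁)
  have hbdd_of_lim : ∀ x₁ ∈ U, ∀ m : ℝ, Tendsto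
      (fun t : ℝ => (f (x₀ + t • (x₁ - x₀)) - f x₀) / t) (𝓝[>] 0) (𝓝 m) →
      ∀ t ∈ Ioc (0:ℝ) 1, m ≤ (f (x₀ + t • (x₁ - x₀)) - f x₀) / t := by
    intro x₁ hx₁ m hm t ht
    refine le_of_tendsto hm ?_
    have hmin : (0:ℝ) < min t 1 := lt_min ht.1 one_pos
    filter_upwards [Ioo_mem_nhdsGT_of_mem (⟨le_rfl, hmin⟩ : (0:ℝ) ∈ Ico 0 (min t 1))]
      with s hs
    exact hQmono x₁ hx₁ ⟨hs.1, (hs.2.trans_le (min_le_right _ _)).le⟩ ht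
      ((hs.2.trans_le (min_le_left _ _)).le)
  have hlim_of_bdd : ∀ x₁ ∈ U, ∀ c : ℝ, (∀ t ∈ Ioc (0:ℝ) 1,
      c ≤ (f (x₀ + t • (x₁ - x₀)) - f x₀) / t) →
      ∃ m : ℝ, Tendsto
      (fun t : ℝ => (f (x₀ + t • (x₁ - x₀)) - f x₀) / t) (𝓝[>] 0) (𝓝 m) := by
    intro x₁ hx₁ c hc
    refine ⟨_, MonotoneOn.tendsto_nhdsWithin_Ioo_right (y := 1)
      (nonempty_Ioo.2 one_pos) ((hQmono x₁ hx₁).mono Ioo_subset_Ioc_self) ?_⟩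
    refine ⟨c, ?_⟩
    rintro r ⟨t, ht, rfl⟩
    exact hc t (Ioo_subset_Ioc_self ht)
  tfae_have 2 → 1 := by
    intro h
    obtain ⟨x₁, hx₁⟩ := hUne
    exact ⟨x₁, hx₁, h x₁ hx₁⟩
  tfae_have 3 → 2 := by
    intro ⟨y, hy⟩ x₁ hx₁
    refine hlim_of_bdd x₁ hx₁ ⟪x₁ - x₀, y⟫ ?_
    intro t ht
    set z := x₀ + t • (x₁ - x₀) with hz
    have hzD : z ∈ D := hUD (hseg x₁ hx₁ t ht)
    have h := hy z
    rw [hft z hzD, EReal.coe_le_coe_iff] at h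
    have hzi : ⟪z - x₀, y⟫ = t * ⟪x₁ - x₀, y⟫ := by
      have hzz : z - x₀ = t • (x₁ - x₀) := by rw [hz]; abel
      rw [hzz, real_inner_smul_left]
    rw [le_div_iff₀ ht.1]
    calc ⟪x₁ - x₀, y⟫ * t = t * ⟪x₁ - x₀, y⟫ := mul_comm _ _
      _ = ⟪z - x₀, y⟫ := hzi.symm
      _ ≤ f z - f x₀ := by linarith
  tfae_have 1 → 3 := by
    rintro ⟨x₁, hx₁, m, hm⟩
    set v : En n := x₁ - x₀ with hv
    have hQge := hbdd_of_lim x₁ hx₁ m hm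
    have hlow : ∀ t ∈ Icc (0:ℝ) 1, f x₀ + m * t ≤ f (x₀ + t • v) := by
      rintro t ⟨ht0, ht1⟩
      rcases eq_or_lt_of_le ht0 with rfl | ht0'
      · simp
      · have := hQge t ⟨ht0', ht1⟩
        rw [le_div_iff₀ ht0'] at this
        linarith
    have hcont : ContinuousOn f U := hU ▸ hfconv.continuousOn_interior
    set O : Set (En n × ℝ) := {p | p.1 ∈ U ∧ f p.1 < p.2} with hO
    have hOopen : IsOpen O := by
      have : O = (U ×ˢ (univ : Set ℝ)) ∩
          (fun p : En n × ℝ => p.2 - f p.1) ⁻¹' Ioi 0 := by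
        ext p; simp [hO, sub_pos, and_comm]
      rw [this]
      refine ContinuousOn.isOpen_inter_preimage ?_ (hUopen.prod isOpen_univ) isOpen_Ioi
      exact (continuous_snd.continuousOn).sub
        (hcont.comp continuous_fst.continuousOn (fun p hp => hp.1))
    have hOconv : Convex ℝ O := by
      rintro p hp q hq a b ha hb hab
      have hUconv : Convex ℝ U := hU ▸ hDconv.interior
      refine ⟨hUconv hp.1 hq.1 ha hb hab, ?_⟩
      have h1 := hfconv.2 (hUD hp.1) (hUD hq.1) ha hb hab
      simp only [smul_eq_mul] at h1
      have h2 : a * f p.1 + b * f q.1 < a * p.2 + b * q.2 := by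
        rcases eq_or_lt_of_le ha with rfl | ha'
        · have hb' : b = 1 := by linarith
          subst hb'
          simpa using hq.2
        · have := mul_lt_mul_of_pos_left hp.2 ha'
          have := mul_le_mul_of_nonneg_left hq.2.le hb
          linarith
      exact lt_of_le_of_lt h1 h2
    set S : Set (En n × ℝ) := segment ℝ ((x₀, f x₀) : En n × ℝ) (x₁, f x₀ + m) with hS
    have hdisj : Disjoint O S := by
      rw [Set.disjoint_left]
      rintro p hpO hpS
      rw [hS, segment_eq_image'] at hpS
      obtain ⟨t, ht, rfl⟩ := hpS
      simp only [Prod.mk_sub_mk, Prod.smul_mk, Prod.mk_add_mk, smul_eq_mul] at hpO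
      rcases eq_or_lt_of_le ht.1 with rfl | ht0
      · exact hx₀U (by simpa using hpO.1)
      · have h1 := hlow t ⟨ht0.le, ht.2⟩
        have h2 := hpO.2
        simp only [add_sub_cancel_left] at h2
        have : x₀ + t • (x₁ - x₀) = (x₀, f x₀).1 + t • ((x₁, f x₀ + m) - (x₀, f x₀)).1 := by
          simp
        rw [hv] at h1
        nlinarith [h1, h2]
    obtain ⟨φ, c, hφO, hφS⟩ := geometric_hahn_banach_open hOconv hOopen
      (convex_segment _ _) hdisj
    set sc : ℝ := φ (0, 1) with hsc
    set wv : En n := (InnerProductSpace.toDual ℝ (En n)).symm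
      (φ.comp (ContinuousLinearMap.inl ℝ (En n) ℝ)) with hwv
    have hφeq : ∀ p : En n × ℝ, φ p = ⟪wv, p.1⟫ + p.2 * sc := by
      rintro ⟨px, pa⟩
      have h1 : (px, pa) = (px, (0:ℝ)) + pa • ((0 : En n), (1:ℝ)) := by
        simp
      rw [h1, map_add, _root_.map_smul]
      have h2 : φ (px, (0:ℝ)) = ⟪wv, px⟫ := by
        rw [hwv, InnerProductSpace.toDual_symm_apply]
        rfl
      rw [h2]
      simp [hsc, smul_eq_mul, mul_comm]
    have hax₁ : ∀ a : ℝ, f x₁ < a → ⟪wv, x₁⟫ + a * sc < c := by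
      intro a ha
      have := hφO (x₁, a) ⟨hx₁, ha⟩
      rwa [hφeq] at this
    have hscle : sc ≤ 0 := by
      by_contra hpos
      push_neg at hpos
      set a : ℝ := max (f x₁ + 1) ((c - ⟪wv, x₁⟫) / sc) with ha
      have h1 : f x₁ < a := lt_of_lt_of_le (by linarith) (le_max_left _ _)
      have h2 := hax₁ a h1
      have h3 : (c - ⟪wv, x₁⟫) / sc ≤ a := le_max_right _ _
      rw [div_le_iff₀ hpos] at h3
      linarith
    have hx₀S : c ≤ ⟪wv, x₀⟫ + f x₀ * sc := by
      have := hφS _ (left_mem_segment ℝ ((x₀, f x₀) : En n × ℝ) (x₁, f x₀ + m))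
      rwa [hφeq] at this
    have hscne : sc < 0 := by
      rcases eq_or_lt_of_le hscle with heq | h
      · exfalso
        have h1 := hax₁ (f x₁ + 1) (by linarith)
        have h2 := hφS _ (right_mem_segment ℝ ((x₀, f x₀) : En n × ℝ) (x₁, f x₀ + m))
        rw [hφeq] at h2
        rw [heq] at h1 h2
        simp only [mul_zero, add_zero] at h1 h2
        linarith
      · exact h
    have hEle : ∀ x ∈ D, ⟪wv, x⟫ + f x * sc ≤ c := by
      intro x hx
      have hpoly : ∀ lam ∈ Ioc (0:ℝ) 1,
          (1 - lam) * ⟪wv, x⟫ + lam * ⟪wv, x₁⟫ +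
            ((1 - lam) * f x + lam * (f x₁ + 1)) * sc < c := by
        intro lam hlam
        have hmem1 : (1 - lam) • x + lam • x₁ ∈ U := by
          rw [hU]
          exact hDconv.combo_self_interior_mem_interior hx (hU ▸ hx₁)
            (by linarith [hlam.2]) hlam.1 (by ring)
        have hmem2 : f ((1 - lam) • x + lam • x₁) < (1 - lam) * f x + lam * (f x₁ + 1) := by
          have h1 := hfconv.2 hx (hUD hx₁) (show (0:ℝ) ≤ 1 - lam by linarith [hlam.2])
            hlam.1.le (by ring)
          simp only [smul_eq_mul] at h1
          nlinarith [hlam.1]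
        have := hφO ((1 - lam) • x + lam • x₁, (1 - lam) * f x + lam * (f x₁ + 1))
          ⟨hmem1, hmem2⟩
        rw [hφeq] at this
        simp only [inner_add_right, real_inner_smul_right] at this
        linarith
      have htendsto : Tendsto (fun lam : ℝ =>
          (1 - lam) * ⟪wv, x⟫ + lam * ⟪wv, x₁⟫ +
            ((1 - lam) * f x + lam * (f x₁ + 1)) * sc) (𝓝[>] 0)
          (𝓝 (⟪wv, x⟫ + f x * sc)) := by
        have hcont2 : Continuous (fun lam : ℝ =>
            (1 - lam) * ⟪wv, x⟫ + lam * ⟪wv, x₁⟫ +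
              ((1 - lam) * f x + lam * (f x₁ + 1)) * sc) :=
          (((continuous_const.sub continuous_id).mul continuous_const).add
            (continuous_id.mul continuous_const)).add
            ((((continuous_const.sub continuous_id).mul continuous_const).add
              (continuous_id.mul continuous_const)).mul continuous_const)
        have := hcont2.tendsto 0
        simp only [sub_zero, one_mul, zero_mul, add_zero, zero_add] at this
        exact this.mono_left nhdsWithin_le_nhds
      refine le_of_tendsto htendsto ?_
      filter_upwards [Ioc_mem_nhdsGT_of_mem (⟨le_rfl, one_pos⟩ : (0:ℝ) ∈ Ico 0 1)]
        with lam hlam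
      exact (hpoly lam hlam).le
    refine ⟨(-sc)⁻¹ • wv, fun x => ?_⟩
    by_cases hxD : x ∈ D
    · rw [hft x hxD]
      rw [EReal.coe_le_coe_iff]
      have h1 := hEle x hxD
      have hinner : ⟪x - x₀, (-sc)⁻¹ • wv⟫ = (-sc)⁻¹ * (⟪wv, x⟫ - ⟪wv, x₀⟫) := by
        rw [real_inner_smul_right, real_inner_comm, inner_sub_right]
      rw [hinner]
      have hns : (0:ℝ) < -sc := by linarith
      have h4 : (-sc)⁻¹ * (⟪wv, x⟫ - ⟪wv, x₀⟫) ≤ f x - f x₀ := by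
        rw [inv_mul_eq_div, div_le_iff₀ hns]
        nlinarith [h1, hx₀S]
      linarith
    · have : u x = ⊤ := not_not.1 hxD
      rw [this]; exact le_top
  tfae_have 3 → 4 := by
    rintro ⟨y, hy⟩
    obtain ⟨x₁, hx₁⟩ := hUne
    have hri : ∀ x ∈ D, f x₀ + ⟪x - x₀, y⟫ ≤ f x := by
      intro x hx
      have h := hy x
      rwa [hft x hx, EReal.coe_le_coe_iff] at h
    obtain ⟨r, hr0, hrU⟩ := Metric.isOpen_iff.1 hUopen x₁ hx₁
    set ε : ℝ := r / 3 with hε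
    have hε0 : 0 < ε := by positivity
    have hball : Metric.closedBall x₁ (2 * ε) ⊆ U := fun z hz =>
      hrU (lt_of_le_of_lt (Metric.mem_closedBall.1 hz) (by rw [hε]; linarith))
    have hcont : ContinuousOn f U := hU ▸ hfconv.continuousOn_interior
    obtain ⟨C, hC⟩ := (isCompact_closedBall x₁ (2 * ε)).exists_bound_of_continuousOn
      (hcont.mono hball)
    set A : ℝ := |C - f x₀| + (ε + ‖x₁ - x₀‖) * ‖y‖ + 1 with hA
    have hA0 : 0 < A := by positivity
    have key : ∀ i : ℕ, ∃ w : En n, w ∈ U ∧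
        ‖w - x₀‖ ≤ ((i:ℝ) + 1)⁻¹ * (ε + ‖x₁ - x₀‖) ∧
        DifferentiableAt ℝ f w ∧ ‖fderiv ℝ f w‖ ≤ 2 * A / ε := by
      intro i
      set t : ℝ := ((i:ℝ) + 1)⁻¹ with htdef
      have ht0 : 0 < t := by positivity
      have ht1 : t ≤ 1 := by
        rw [htdef]
        rw [inv_le_one_iff₀]
        right; push_cast; linarith [Nat.cast_nonneg (α := ℝ) i]
      set z : En n := x₀ + t • (x₁ - x₀) with hzdef
      have hdecomp : ∀ w : En n, (1 - t) • x₀ + t • (x₁ + t⁻¹ • (w - z)) = w := by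
        intro w
        have h1 : t • (t⁻¹ • (w - z)) = w - z := by
          rw [smul_smul, mul_inv_cancel₀ ht0.ne', one_smul]
        rw [smul_add, h1, hzdef, smul_sub, sub_smul, one_smul]
        abel
      have hshift : ∀ w : En n, dist w z < 2 * (t * ε) →
          x₁ + t⁻¹ • (w - z) ∈ Metric.closedBall x₁ (2 * ε) := by
        intro w hw
        rw [Metric.mem_closedBall, dist_eq_norm, add_sub_cancel_left, norm_smul,
          Real.norm_eq_abs, abs_of_pos (inv_pos.2 ht0)]
        rw [dist_eq_norm] at hw
        calc t⁻¹ * ‖w - z‖ ≤ t⁻¹ * (2 * (t * ε)) :=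
              mul_le_mul_of_nonneg_left hw.le (inv_pos.2 ht0).le
          _ = 2 * ε := by field_simp
      have h2B : Metric.ball z (2 * (t * ε)) ⊆ U := by
        intro w hw
        have hmem : x₁ + t⁻¹ • (w - z) ∈ U := hball (hshift w (Metric.mem_ball.1 hw))
        have hcombo := hDconv.combo_self_interior_mem_interior hx₀D (hU ▸ hmem)
          (show (0:ℝ) ≤ 1 - t by linarith) ht0 (by ring)
        rw [hdecomp w] at hcombo
        rwa [hU]
      have hfup : ∀ w ∈ Metric.ball z (2 * (t * ε)), f w ≤ f x₀ + t * (C - f x₀) := by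
        intro w hw
        have hmem := hshift w (Metric.mem_ball.1 hw)
        have hconv2 := hfconv.2 hx₀D (hUD (hball hmem))
          (show (0:ℝ) ≤ 1 - t by linarith) ht0.le (by ring)
        rw [hdecomp w] at hconv2
        simp only [smul_eq_mul] at hconv2
        have hfC : f (x₁ + t⁻¹ • (w - z)) ≤ C :=
          le_trans (le_abs_self _) (hC _ hmem)
        nlinarith
      have hzx₀ : ‖z - x₀‖ = t * ‖x₁ - x₀‖ := by
        rw [hzdef, add_sub_cancel_left, norm_smul, Real.norm_eq_abs, abs_of_pos ht0]
      have hflow : ∀ w ∈ Metric.ball z (2 * (t * ε)),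
          f x₀ - (2 * ε + ‖x₁ - x₀‖) * ‖y‖ ≤ f w := by
        intro w hw
        have h1 := hri w (hUD (h2B hw))
        have h2 : ‖w - x₀‖ ≤ 2 * (t * ε) + t * ‖x₁ - x₀‖ := by
          calc ‖w - x₀‖ ≤ ‖w - z‖ + ‖z - x₀‖ := norm_sub_le_norm_sub_add_norm_sub _ _ _
            _ ≤ 2 * (t * ε) + t * ‖x₁ - x₀‖ := by
                rw [hzx₀]
                have := Metric.mem_ball.1 hw
                rw [dist_eq_norm] at this
                linarith
        have h3 : |⟪w - x₀, y⟫| ≤ ‖w - x₀‖ * ‖y‖ := abs_real_inner_le_norm _ _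
        have h4 : ‖w - x₀‖ * ‖y‖ ≤ (2 * (t * ε) + t * ‖x₁ - x₀‖) * ‖y‖ :=
          mul_le_mul_of_nonneg_right h2 (norm_nonneg _)
        have h5 : (2 * (t * ε) + t * ‖x₁ - x₀‖) * ‖y‖ ≤ (2 * ε + ‖x₁ - x₀‖) * ‖y‖ := by
          have : 2 * (t * ε) + t * ‖x₁ - x₀‖ ≤ 2 * ε + ‖x₁ - x₀‖ := by
            nlinarith [norm_nonneg (x₁ - x₀)]
          exact mul_le_mul_of_nonneg_right this (norm_nonneg _)
        have h6 : -((2 * ε + ‖x₁ - x₀‖) * ‖y‖) ≤ ⟪w - x₀, y⟫ := by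
          nlinarith [abs_nonneg ⟪w - x₀, y⟫, neg_abs_le ⟪w - x₀, y⟫]
        linarith
      have hfb : ConvexOn ℝ (Metric.ball z (2 * (t * ε))) f :=
        hfconv.subset (h2B.trans hUD) (convex_ball _ _)
      have hbdimage : Bornology.IsBounded (f '' Metric.ball z (2 * (t * ε))) := by
        refine (Metric.isBounded_Icc (f x₀ - (2 * ε + ‖x₁ - x₀‖) * ‖y‖)
          (f x₀ + t * (C - f x₀))).subset ?_
        rintro _ ⟨w, hw, rfl⟩
        exact ⟨hflow w hw, hfup w hw⟩
      obtain ⟨K, hK⟩ := hfb.exists_lipschitzOnWith_of_isBounded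
        (r' := t * ε * (3/2)) (by nlinarith) hbdimage
      have hae := hK.ae_differentiableWithinAt_of_mem (μ := volume)
      have hexists : ∃ w ∈ Metric.ball z (t * ε), DifferentiableAt ℝ f w := by
        by_contra hcon
        push_neg at hcon
        have hsub : Metric.ball z (t * ε) ⊆
            {w | ¬ (w ∈ Metric.ball z (t * ε * (3/2)) →
              DifferentiableWithinAt ℝ f (Metric.ball z (t * ε * (3/2))) w)} := by
          intro w hw himp
          have hw' : w ∈ Metric.ball z (t * ε * (3/2)) :=
            Metric.ball_subset_ball (by nlinarith) hw
          exact hcon w hw ((himp hw').differentiableAt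
            ((Metric.isOpen_ball).mem_nhds hw'))
        have h0 : volume (Metric.ball z (t * ε)) = 0 :=
          measure_mono_null hsub (by simpa [ae_iff] using hae)
        exact absurd h0 (Metric.measure_ball_pos volume z (by positivity)).ne'
      obtain ⟨w, hwB, hwd⟩ := hexists
      have hwU : w ∈ U := h2B (Metric.ball_subset_ball (by nlinarith) hwB)
      have hgb : ∀ d : En n, ‖d‖ ≤ t * ε / 2 → fderiv ℝ f w d ≤ t * A := by
        intro d hd
        have hwdB : w + d ∈ Metric.ball z (2 * (t * ε)) := by
          rw [Metric.mem_ball]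
          calc dist (w + d) z ≤ dist (w + d) w + dist w z := dist_triangle _ _ _
            _ < t * ε / 2 + t * ε := by
                rw [dist_eq_norm, add_sub_cancel_left]
                have := Metric.mem_ball.1 hwB
                exact add_lt_add_of_le_of_lt hd this
            _ ≤ 2 * (t * ε) := by nlinarith
        have h1 := aux_deriv_le hfconv (hUD hwU) (hUD (h2B hwdB)) hwd.hasFDerivAt
        have h2 := hfup _ hwdB
        have h3 := hri w (hUD hwU)
        have h4 : ‖w - x₀‖ ≤ t * (ε + ‖x₁ - x₀‖) := by
          have hb := Metric.mem_ball.1 hwB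
          rw [dist_eq_norm] at hb
          calc ‖w - x₀‖ ≤ ‖w - z‖ + ‖z - x₀‖ := norm_sub_le_norm_sub_add_norm_sub _ _ _
            _ ≤ t * (ε + ‖x₁ - x₀‖) := by rw [hzx₀]; nlinarith
        have h5 : -(t * (ε + ‖x₁ - x₀‖) * ‖y‖) ≤ ⟪w - x₀, y⟫ := by
          have ha := abs_real_inner_le_norm (w - x₀) y
          have hmm := mul_le_mul_of_nonneg_right h4 (norm_nonneg y)
          nlinarith [neg_abs_le ⟪w - x₀, y⟫]
        have h6 : t * (C - f x₀) ≤ t * |C - f x₀| :=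
          mul_le_mul_of_nonneg_left (le_abs_self _) ht0.le
        have h7 : t * A = t * |C - f x₀| + t * (ε + ‖x₁ - x₀‖) * ‖y‖ + t := by
          rw [hA]; ring
        nlinarith [h1, h2, h3, h5, h6, ht0]
      have hnorm : ‖fderiv ℝ f w‖ ≤ 2 * A / ε := by
        refine ContinuousLinearMap.opNorm_le_bound _ (by positivity) (fun d => ?_)
        rcases eq_or_ne d 0 with rfl | hd0
        · simp
        have hdn : 0 < ‖d‖ := norm_pos_iff.2 hd0
        have hc0 : (0:ℝ) < t * ε / 2 / ‖d‖ := by positivity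
        have hs1 := hgb ((t * ε / 2 / ‖d‖) • d) (by
          rw [norm_smul, Real.norm_eq_abs, abs_of_pos hc0, div_mul_cancel₀ _ hdn.ne'])
        have hs2 := hgb (-((t * ε / 2 / ‖d‖) • d)) (by
          rw [norm_neg, norm_smul, Real.norm_eq_abs, abs_of_pos hc0,
            div_mul_cancel₀ _ hdn.ne'])
        rw [map_neg] at hs2
        rw [_root_.map_smul] at hs1 hs2
        simp only [smul_eq_mul] at hs1 hs2
        have hkey2 : (t * ε / 2 / ‖d‖) * (2 * A / ε * ‖d‖) = t * A := by
          field_simp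
        rw [Real.norm_eq_abs, abs_le]
        constructor
        · nlinarith [hs2, hkey2, hc0]
        · nlinarith [hs1, hkey2, hc0]
      refine ⟨w, hwU, ?_, hwd, hnorm⟩
      have hb := Metric.mem_ball.1 hwB
      rw [dist_eq_norm] at hb
      calc ‖w - x₀‖ ≤ ‖w - z‖ + ‖z - x₀‖ := norm_sub_le_norm_sub_add_norm_sub _ _ _
        _ ≤ t * (ε + ‖x₁ - x₀‖) := by rw [hzx₀]; nlinarith
    choose w hwU hwdist hwdiff hwgrad using key
    refine ⟨w, hwU, ?_, hwdiff, ?_⟩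
    · rw [tendsto_iff_dist_tendsto_zero]
      refine squeeze_zero (g := fun i : ℕ => ((i:ℝ) + 1)⁻¹ * (ε + ‖x₁ - x₀‖))
        (fun i => dist_nonneg) (fun i => ?_) ?_
      · rw [dist_eq_norm]; exact hwdist i
      · have h : Tendsto (fun n : ℕ => 1 / ((n : ℝ) + 1)) atTop (𝓝 0) := tendsto_one_div_add_atTop_nhds_zero_nat
        have h2 : Tendsto (fun i : ℕ => ((i:ℝ) + 1)⁻¹ * (ε + ‖x₁ - x₀‖)) atTop (𝓝 0) := by
          have := h.mul_const (ε + ‖x₁ - x₀‖)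
          simpa [one_div] using this
        exact h2
    · intro hT
      obtain ⟨i, hi⟩ := (hT.eventually (eventually_ge_atTop (2 * A / ε + 1))).exists
      linarith [hwgrad i]
  tfae_have 4 → 3 := by
    rintro ⟨x, hxU, hxlim, hxdiff, hxnt⟩
    rw [tendsto_atTop] at hxnt
    push_neg at hxnt
    obtain ⟨b, hb⟩ := hxnt
    obtain ⟨φ, hφ, hφb⟩ := Filter.extraction_of_frequently_atTop hb
    set g : ℕ → En n := fun k => (InnerProductSpace.toDual ℝ (En n)).symm
      (fderiv ℝ f (x (φ k))) with hg
    have hgb : ∀ k, g k ∈ Metric.closedBall (0 : En n) b := by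
      intro k
      rw [Metric.mem_closedBall, dist_zero_right, hg, LinearIsometryEquiv.norm_map]
      exact (hφb k).le
    obtain ⟨y0, -, ψ, hψ, hgy⟩ := tendsto_subseq_of_bounded
      Metric.isBounded_closedBall hgb
    set p : ℕ → En n := fun k => x (φ (ψ k)) with hp
    have hplim : Tendsto p atTop (𝓝 x₀) := hxlim.comp ((hφ.comp hψ).tendsto_atTop)
    refine ⟨y0, fun x' => ?_⟩
    by_cases hx'D : x' ∈ D
    swap
    · rw [not_not.1 hx'D]; exact le_top
    rw [hft x' hx'D, EReal.coe_le_coe_iff]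
    have hfin2 : f x₀ + ⟪x' - x₀, y0⟫ ≤ f x' := by
      refine le_of_forall_pos_le_add (fun δ hδ => ?_)
      have hev1 : ∀ᶠ k in atTop, f x₀ - δ < f (p k) := by
        have hlt : ((f x₀ - δ : ℝ) : EReal) < u x₀ := by
          rw [hft x₀ hx₀D]; exact_mod_cast sub_lt_self _ hδ
        filter_upwards [hplim.eventually (hlsc x₀ _ hlt)] with k hk
        rwa [hft (p k) (hUD (hxU (φ (ψ k)))), gt_iff_lt, EReal.coe_lt_coe_iff] at hk
      have hineq : ∀ k, ⟪x' - p k, g (ψ k)⟫ ≤ f x' - f (p k) := by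
        intro k
        have hL := (hxdiff (φ (ψ k))).hasFDerivAt
        have h1 := aux_deriv_le hfconv (hUD (hxU (φ (ψ k))))
          (show p k + (x' - p k) ∈ D by simpa using hx'D) hL
        have h2 : ⟪x' - p k, g (ψ k)⟫ = fderiv ℝ f (p k) (x' - p k) := by
          rw [real_inner_comm, hg, InnerProductSpace.toDual_symm_apply]
        rw [h2]
        simpa [hp] using h1
      have htend : Tendsto (fun k => f x₀ - δ + ⟪x' - p k, g (ψ k)⟫) atTop
          (𝓝 (f x₀ - δ + ⟪x' - x₀, y0⟫)) :=
        tendsto_const_nhds.add ((tendsto_const_nhds.sub hplim).inner hgy)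
      have hle : f x₀ - δ + ⟪x' - x₀, y0⟫ ≤ f x' := by
        refine le_of_tendsto htend ?_
        filter_upwards [hev1] with k hk
        linarith [hineq k]
      linarith
    exact hfin2
  tfae_finish
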